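/- Let d, D ≥ 2 be integers, let C_4 ∈ ℝ^{24×24} be the associated transfer matrix for k = 4, and for ρ ∈ S_4 let T_ρ ∈ ℝ^{24×24} have entries ⟨τ|T_ρ|θ⟩ = Σ_{σ∈S_4} Wg(στ⁻¹, dD) d^{#(σρ)} D^{#(σθ⁻¹)}. Let a, b ≥ 1 be integers, let v ∈ ℝ^{24} be a row vector with v C_4 = v and v·δ_e = 1, where δ_e is the standard basis column vector at the identity e, and set μ₂ = (dD² − d)/(d²D² − 1). Then there exist a constant K ∈ ℝ and constants C ≥ 0 and 0 ≤ ρ' < μ₂ such that for every integer r ≥ 0, | v T_{(12)}^a C_4^r (T_{(12)}^b + T_{(34)}^b − 2 T_{(13)}^b) δ_e − K μ₂^r | ≤ C (ρ')^r. (This is the transfer-matrix form of the statement that the average 2-norm correlation measure N(A:B) of the random MPS ensemble decays exponentially with correlation length ξ_1D = −1/log μ₂.) -/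

import Mathlib

open Equiv Matrix

/-- Number of cycles of a permutation, counting fixed points as 1-cycles. -/
noncomputable def cyc {k : ℕ} (π : Equiv.Perm (Fin k)) : ℕ :=
  (k - π.cycleType.sum) + Multiset.card π.cycleType

/-- Gram matrix `G(q)_{στ} = q^{#(στ⁻¹)}`. -/
noncomputable def Gram (k q : ℕ) :
    Matrix (Equiv.Perm (Fin k)) (Equiv.Perm (Fin k)) ℝ :=
  Matrix.of fun σ τ => (q : ℝ) ^ cyc (σ * τ⁻¹)

/-- Weingarten matrix `W = G(q)⁻¹`, so that `Wg(στ⁻¹, q) = W σ τ`. -/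
noncomputable def WgM (k q : ℕ) :
    Matrix (Equiv.Perm (Fin k)) (Equiv.Perm (Fin k)) ℝ :=
  (Gram k q)⁻¹

/-- Transfer matrix `⟨τ|C_k|θ⟩ = Σ_σ Wg(στ⁻¹, dD) d^{#(σ)} D^{#(σθ⁻¹)}`. -/
noncomputable def Ck (k d D : ℕ) :
    Matrix (Equiv.Perm (Fin k)) (Equiv.Perm (Fin k)) ℝ :=
  Matrix.of fun τ θ =>
    ∑ σ : Equiv.Perm (Fin k),
      WgM k (d * D) σ τ * (d : ℝ) ^ cyc σ * (D : ℝ) ^ cyc (σ * θ⁻¹)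

/-- Transfer matrix `⟨τ|T_ρ|θ⟩ = Σ_σ Wg(στ⁻¹, dD) d^{#(σρ)} D^{#(σθ⁻¹)}`. -/
noncomputable def Tmat (k d D : ℕ) (ρ : Equiv.Perm (Fin k)) :
    Matrix (Equiv.Perm (Fin k)) (Equiv.Perm (Fin k)) ℝ :=
  Matrix.of fun τ θ =>
    ∑ σ : Equiv.Perm (Fin k),
      WgM k (d * D) σ τ * (d : ℝ) ^ cyc (σ * ρ) * (D : ℝ) ^ cyc (σ * θ⁻¹)

/-- `μ₂ = (dD² − d)/(d²D² − 1)`. -/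
noncomputable def mu2 (d D : ℕ) : ℝ :=
  ((d : ℝ) * D ^ 2 - d) / ((d : ℝ) ^ 2 * D ^ 2 - 1)

section Aux

set_option maxRecDepth 10000 in
private lemma cyc_swap_step : ∀ σ : Equiv.Perm (Fin 4),
    ∀ ρ ∈ [Equiv.swap (0 : Fin 4) 1, Equiv.swap (2 : Fin 4) 3, Equiv.swap (0 : Fin 4) 2],
      cyc (σ * ρ) + 1 = cyc σ ∨ cyc σ + 1 = cyc (σ * ρ) := by decide

private lemma cyc_inv {k : ℕ} (π : Equiv.Perm (Fin k)) : cyc π⁻¹ = cyc π := by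
  simp [cyc, Equiv.Perm.cycleType_inv]

private lemma gram_symm (k q : ℕ) : (Gram k q)ᵀ = Gram k q := by
  ext σ τ
  simp only [transpose_apply, Gram, Matrix.of_apply]
  congr 1
  rw [← cyc_inv (τ * σ⁻¹), _root_.mul_inv_rev, inv_inv]

private lemma wg_symm (k q : ℕ) (σ τ : Equiv.Perm (Fin k)) :
    WgM k q σ τ = WgM k q τ σ := by
  have h : (WgM k q)ᵀ = WgM k q := by
    rw [WgM, Matrix.transpose_nonsing_inv, gram_symm]
  have := congrFun (congrFun h τ) σ
  simpa [Matrix.transpose_apply] using this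

/-- `M_ρ` with entries `d^{#(σρ)} D^{#(σθ⁻¹)}`, so that `T_ρ = G⁻¹ M_ρ`. -/
private noncomputable def Mmat (k d D : ℕ) (ρ : Equiv.Perm (Fin k)) :
    Matrix (Equiv.Perm (Fin k)) (Equiv.Perm (Fin k)) ℝ :=
  Matrix.of fun σ θ => (d : ℝ) ^ cyc (σ * ρ) * (D : ℝ) ^ cyc (σ * θ⁻¹)

private lemma tmat_eq (k d D : ℕ) (ρ : Equiv.Perm (Fin k)) :
    Tmat k d D ρ = (Gram k (d * D))⁻¹ * Mmat k d D ρ := by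
  ext τ θ
  simp only [Tmat, Mmat, Matrix.mul_apply, Matrix.of_apply]
  refine Finset.sum_congr rfl fun σ _ => ?_
  rw [wg_symm]
  rw [show ((Gram k (d * D))⁻¹ : Matrix _ _ ℝ) τ σ = WgM k (d * D) τ σ from rfl]
  ring

/-- Standard basis vector `δ_π`. -/
private noncomputable def dlt (π : Equiv.Perm (Fin 4)) : Equiv.Perm (Fin 4) → ℝ :=
  Pi.single π 1

private lemma dlt_def (π : Equiv.Perm (Fin 4)) :
    dlt π = Pi.single π (1 : ℝ) := rfl

private lemma ck_eq_tmat_one (k d D : ℕ) : Ck k d D = Tmat k d D 1 := by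
  ext τ θ
  simp [Ck, Tmat, mul_one]

end Aux

/-- Transfer-matrix form of the exponential decay of the average 2-norm correlation
measure `E N(A:B)` of the random MPS ensemble: for any normalized left fixed vector `v` of
`C₄`, the quantity `v T_{(12)}^a C₄^r (T_{(12)}^b + T_{(34)}^b − 2T_{(13)}^b) δ_e` equals
`K μ₂^r` up to an error of size `C (ρ')^r` with `ρ' < μ₂`; i.e. the decay has correlation
length `ξ₁D = −1/log μ₂`. -/
theorem mps_norm_exponential_decay (d D : ℕ) (hd : 2 ≤ d) (hD : 2 ≤ D)
    (a b : ℕ) (ha : 1 ≤ a) (hb : 1 ≤ b) (v : Equiv.Perm (Fin 4) → ℝ)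
    (hv : v ᵥ* Ck 4 d D = v)
    (hv1 : v ⬝ᵥ Pi.single (1 : Equiv.Perm (Fin 4)) (1 : ℝ) = 1) :
    ∃ K C ρ' : ℝ, 0 ≤ C ∧ 0 ≤ ρ' ∧ ρ' < mu2 d D ∧
      ∀ r : ℕ,
        |v ⬝ᵥ ((Tmat 4 d D (Equiv.swap (0 : Fin 4) 1)) ^ a * (Ck 4 d D) ^ r *
            ((Tmat 4 d D (Equiv.swap (0 : Fin 4) 1)) ^ b
              + (Tmat 4 d D (Equiv.swap (2 : Fin 4) 3)) ^ b
              - (2 : ℝ) • (Tmat 4 d D (Equiv.swap (0 : Fin 4) 2)) ^ b)).mulVec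
            (Pi.single (1 : Equiv.Perm (Fin 4)) (1 : ℝ))
          - K * (mu2 d D) ^ r| ≤ C * ρ' ^ r := by
  classical
  by_cases hG : IsUnit (Gram 4 (d * D)).det
  · -- main case: the Gram matrix is invertible
    have hd2 : (2 : ℝ) ≤ (d : ℝ) := by exact_mod_cast hd
    have hD2 : (2 : ℝ) ≤ (D : ℝ) := by exact_mod_cast hD
    have hdD : (4 : ℝ) ≤ (d : ℝ) * D := by nlinarith
    have hΔ : (0 : ℝ) < (d : ℝ) ^ 2 * (D : ℝ) ^ 2 - 1 := by nlinarith
    set c : ℝ := ((D : ℝ) * (d : ℝ) ^ 2 - D) / ((d : ℝ) ^ 2 * (D : ℝ) ^ 2 - 1) with hc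
    have hA : (d : ℝ) = mu2 d D + c * ((d : ℝ) * D) := by
      rw [mu2, hc]; field_simp; ring
    have hB : (D : ℝ) = mu2 d D * ((d : ℝ) * D) + c := by
      rw [mu2, hc, div_mul_eq_mul_div, ← add_div, eq_div_iff hΔ.ne']; ring
    have core : ∀ n m : ℕ, (m + 1 = n ∨ n + 1 = m) →
        (d : ℝ) ^ m * (D : ℝ) ^ n = mu2 d D * ((d : ℝ) * D) ^ n + c * ((d : ℝ) * D) ^ m := by
      rintro n m (h | h)
      · subst h
        calc (d : ℝ) ^ m * (D : ℝ) ^ (m + 1) = ((d : ℝ) * D) ^ m * D := by ring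
          _ = ((d : ℝ) * D) ^ m * (mu2 d D * ((d : ℝ) * D) + c) := by rw [← hB]
          _ = mu2 d D * ((d : ℝ) * D) ^ (m + 1) + c * ((d : ℝ) * D) ^ m := by ring
      · subst h
        calc (d : ℝ) ^ (n + 1) * (D : ℝ) ^ n = ((d : ℝ) * D) ^ n * d := by ring
          _ = ((d : ℝ) * D) ^ n * (mu2 d D + c * ((d : ℝ) * D)) := by rw [← hA]
          _ = mu2 d D * ((d : ℝ) * D) ^ n + c * ((d : ℝ) * D) ^ (n + 1) := by ring
    have lift : ∀ (ρ : Equiv.Perm (Fin 4)) (z y : Equiv.Perm (Fin 4) → ℝ),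
        Mmat 4 d D ρ *ᵥ z = Gram 4 (d * D) *ᵥ y → Tmat 4 d D ρ *ᵥ z = y := by
      intro ρ z y hzy
      rw [tmat_eq, ← Matrix.mulVec_mulVec, hzy, Matrix.mulVec_mulVec,
        Matrix.nonsing_inv_mul _ hG, Matrix.one_mulVec]
    have key1 : ∀ ρ : Equiv.Perm (Fin 4), ρ⁻¹ = ρ →
        (∀ σ, cyc (σ * ρ) + 1 = cyc σ ∨ cyc σ + 1 = cyc (σ * ρ)) →
        Tmat 4 d D ρ *ᵥ dlt 1 = mu2 d D • dlt 1 + c • dlt ρ := by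
      intro ρ hρ hstep
      apply lift
      rw [Matrix.mulVec_add, Matrix.mulVec_smul, Matrix.mulVec_smul]
      funext σ
      simp only [dlt_def, Matrix.mulVec_single, Mmat, Gram, Matrix.of_apply, Pi.add_apply,
        Pi.smul_apply, smul_eq_mul, mul_one, inv_one, Matrix.col_apply, MulOpposite.op_one, one_smul]
      rw [hρ]
      push_cast
      exact core (cyc σ) (cyc (σ * ρ)) (hstep σ)
    have key2 : ∀ ρ : Equiv.Perm (Fin 4), ρ⁻¹ = ρ →
        Tmat 4 d D ρ *ᵥ dlt ρ = dlt ρ := by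
      intro ρ hρ
      apply lift
      funext σ
      simp only [dlt_def, Matrix.mulVec_single, Mmat, Gram, Matrix.of_apply, mul_one, Matrix.col_apply, MulOpposite.op_one, one_smul]
      rw [hρ]
      push_cast
      rw [mul_pow]
    set x : Equiv.Perm (Fin 4) → ℝ :=
      dlt (Equiv.swap (0 : Fin 4) 1) + dlt (Equiv.swap (2 : Fin 4) 3)
        - (2 : ℝ) • dlt (Equiv.swap (0 : Fin 4) 2) with hx
    have key3 : Ck 4 d D *ᵥ x = mu2 d D • x := by
      rw [ck_eq_tmat_one]
      apply lift
      rw [hx]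
      funext σ
      simp only [dlt_def, Matrix.mulVec_sub, Matrix.mulVec_add, Matrix.mulVec_smul,
        Matrix.mulVec_single, Mmat, Gram, Matrix.of_apply, Pi.sub_apply, Pi.add_apply,
        Pi.smul_apply, smul_eq_mul, mul_one, Equiv.swap_inv, Matrix.col_apply, MulOpposite.op_one,
        one_smul]
      have e1 := core (cyc (σ * Equiv.swap (0 : Fin 4) 1)) (cyc σ)
        (Or.symm (cyc_swap_step σ _ (by simp)))
      have e2 := core (cyc (σ * Equiv.swap (2 : Fin 4) 3)) (cyc σ)
        (Or.symm (cyc_swap_step σ _ (by simp)))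
      have e3 := core (cyc (σ * Equiv.swap (0 : Fin 4) 2)) (cyc σ)
        (Or.symm (cyc_swap_step σ _ (by simp)))
      push_cast
      rw [e1, e2, e3]
      ring
    have keypow : ∀ ρ : Equiv.Perm (Fin 4), ρ⁻¹ = ρ →
        (∀ σ, cyc (σ * ρ) + 1 = cyc σ ∨ cyc σ + 1 = cyc (σ * ρ)) →
        ∀ n : ℕ, (Tmat 4 d D ρ) ^ n *ᵥ dlt 1 =
          (mu2 d D) ^ n • dlt 1
            + (c * ∑ i ∈ Finset.range n, (mu2 d D) ^ i) • dlt ρ := by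
      intro ρ hρ hstep n
      induction n with
      | zero => simp
      | succ n ih =>
        rw [pow_succ', ← Matrix.mulVec_mulVec, ih, Matrix.mulVec_add,
          Matrix.mulVec_smul, Matrix.mulVec_smul, key1 ρ hρ hstep, key2 ρ hρ]
        funext τ
        simp only [Finset.sum_range_succ, Pi.add_apply, Pi.smul_apply, smul_eq_mul]
        ring
    have hCr : ∀ r : ℕ, (Ck 4 d D) ^ r *ᵥ x = (mu2 d D) ^ r • x := by
      intro r
      induction r with
      | zero => simp
      | succ r ih =>
        rw [pow_succ', ← Matrix.mulVec_mulVec, ih, Matrix.mulVec_smul, key3,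
          smul_smul, ← pow_succ]
    have h12 := keypow (Equiv.swap (0 : Fin 4) 1) (Equiv.swap_inv _ _)
      (fun σ => cyc_swap_step σ _ (by simp)) b
    have h34 := keypow (Equiv.swap (2 : Fin 4) 3) (Equiv.swap_inv _ _)
      (fun σ => cyc_swap_step σ _ (by simp)) b
    have h13 := keypow (Equiv.swap (0 : Fin 4) 2) (Equiv.swap_inv _ _)
      (fun σ => cyc_swap_step σ _ (by simp)) b
    have hS : ((Tmat 4 d D (Equiv.swap (0 : Fin 4) 1)) ^ b
          + (Tmat 4 d D (Equiv.swap (2 : Fin 4) 3)) ^ b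
          - (2 : ℝ) • (Tmat 4 d D (Equiv.swap (0 : Fin 4) 2)) ^ b) *ᵥ dlt 1
        = (c * ∑ i ∈ Finset.range b, (mu2 d D) ^ i) • x := by
      rw [Matrix.sub_mulVec, Matrix.add_mulVec, Matrix.smul_mulVec,
        h12, h34, h13, hx]
      funext τ
      simp only [Pi.sub_apply, Pi.add_apply, Pi.smul_apply, smul_eq_mul]
      ring
    refine ⟨(c * ∑ i ∈ Finset.range b, (mu2 d D) ^ i) *
        (v ⬝ᵥ ((Tmat 4 d D (Equiv.swap (0 : Fin 4) 1)) ^ a *ᵥ x)), 0, 0,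
      le_refl 0, le_refl 0, ?_, ?_⟩
    · rw [mu2]
      apply div_pos _ hΔ
      nlinarith
    · intro r
      rw [show Pi.single (1 : Equiv.Perm (Fin 4)) (1 : ℝ) = dlt 1 from rfl]
      have hval : v ⬝ᵥ ((Tmat 4 d D (Equiv.swap (0 : Fin 4) 1)) ^ a * (Ck 4 d D) ^ r *
            ((Tmat 4 d D (Equiv.swap (0 : Fin 4) 1)) ^ b
              + (Tmat 4 d D (Equiv.swap (2 : Fin 4) 3)) ^ b
              - (2 : ℝ) • (Tmat 4 d D (Equiv.swap (0 : Fin 4) 2)) ^ b)).mulVec (dlt 1)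
          = ((c * ∑ i ∈ Finset.range b, (mu2 d D) ^ i) *
            (v ⬝ᵥ ((Tmat 4 d D (Equiv.swap (0 : Fin 4) 1)) ^ a *ᵥ x))) * (mu2 d D) ^ r := by
        rw [show ((Tmat 4 d D (Equiv.swap (0 : Fin 4) 1)) ^ a * (Ck 4 d D) ^ r *
            ((Tmat 4 d D (Equiv.swap (0 : Fin 4) 1)) ^ b
              + (Tmat 4 d D (Equiv.swap (2 : Fin 4) 3)) ^ b
              - (2 : ℝ) • (Tmat 4 d D (Equiv.swap (0 : Fin 4) 2)) ^ b)).mulVec (dlt 1)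
          = (Tmat 4 d D (Equiv.swap (0 : Fin 4) 1)) ^ a *ᵥ ((Ck 4 d D) ^ r *ᵥ
            (((Tmat 4 d D (Equiv.swap (0 : Fin 4) 1)) ^ b
              + (Tmat 4 d D (Equiv.swap (2 : Fin 4) 3)) ^ b
              - (2 : ℝ) • (Tmat 4 d D (Equiv.swap (0 : Fin 4) 2)) ^ b) *ᵥ dlt 1)) from by
            rw [Matrix.mulVec_mulVec, Matrix.mulVec_mulVec]]
        rw [hS, Matrix.mulVec_smul, hCr, Matrix.mulVec_smul, Matrix.mulVec_smul]
        simp only [dotProduct_smul, smul_eq_mul]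
        ring
      rw [hval, sub_self, abs_zero]
      positivity
  · -- degenerate case: contradiction with the normalization of `v`
    exfalso
    have hW0 : WgM 4 (d * D) = 0 := Matrix.nonsing_inv_apply_not_isUnit _ hG
    have hC0 : Ck 4 d D = 0 := by
      ext τ θ
      simp [Ck, hW0]
    rw [hC0, Matrix.vecMul_zero] at hv
    rw [← hv] at hv1
    simp [zero_dotProduct] at hv1
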